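/- Let U : Hilbr → Set preserve directed colimits, and suppose U(f) = U(g) for all parallel pairs f, g : A → B with dim(A) = λ, for some infinite cardinal λ. Then U(f) = U(g) for all parallel pairs f, g : A → B with dim(A) ≥ λ. -/

import Mathlib

open CategoryTheory CategoryTheory.Limits

/-- The category `Hilbr` of Hilbert spaces over `𝕜` (`ℝ` or `ℂ`) and linear isometric
embeddings. -/
structure HilbCat (𝕜 : Type) [RCLike 𝕜] : Type 1 where
  carrier : Type
  [nacg : NormedAddCommGroup carrier]
  [ips : InnerProductSpace 𝕜 carrier]
  [cs : CompleteSpace carrier]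

attribute [instance] HilbCat.nacg HilbCat.ips HilbCat.cs

variable {𝕜 : Type} [RCLike 𝕜]

instance : Category (HilbCat 𝕜) where
  Hom A B := A.carrier →ₗᵢ[𝕜] B.carrier
  id A := LinearIsometry.id
  comp f g := g.comp f
  id_comp f := rfl
  comp_id f := rfl
  assoc f g h := rfl

/-- View a morphism of `HilbCat` as a linear isometry. -/
def homFn {A B : HilbCat 𝕜} (f : A ⟶ B) : A.carrier →ₗᵢ[𝕜] B.carrier := f

/-- View a linear isometry as a morphism of `HilbCat`. -/
def toHom {A B : HilbCat 𝕜} (f : A.carrier →ₗᵢ[𝕜] B.carrier) : A ⟶ B := f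

/-- A functor preserves directed colimits if it preserves colimits of shape `J` for every
nonempty directed preorder `J`. -/
def PreservesDirectedColimits {C : Type*} [Category C] (U : C ⥤ Type) : Prop :=
  ∀ (J : Type) [Preorder J] [IsDirected J (· ≤ ·)] [Nonempty J],
    Nonempty (PreservesColimitsOfShape J U)

/-- `x ∈ U(A)` is supported on the subspace `A₀ ⊆ A` if any two morphisms out of `A`
agreeing on `A₀` are equalized by `x`. -/
def SuppOn (U : HilbCat 𝕜 ⥤ Type) (A : HilbCat 𝕜) (A₀ : Submodule 𝕜 A.carrier)
    (x : U.obj A) : Prop :=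
  ∀ (B : HilbCat 𝕜) (f g : A ⟶ B), (∀ a ∈ A₀, homFn f a = homFn g a) →
    U.map f x = U.map g x

/-- The Hilbert space `ℓ²(X)` as an object of `HilbCat`. -/
noncomputable def lpObj (𝕜 : Type) [RCLike 𝕜] (X : Type) : HilbCat 𝕜 :=
  ⟨lp (fun _ : X => 𝕜) 2⟩

/-- `A` has Hilbert dimension `c`: it admits an orthonormal (Hilbert) basis indexed by a type
of cardinality `c`. -/
def HasHilbertDim (A : HilbCat 𝕜) (c : Cardinal) : Prop :=
  ∃ (ι : Type) (_ : HilbertBasis ι 𝕜 A.carrier), Cardinal.mk ι = c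

/-- `A` has Hilbert dimension `≥ c`. -/
def HasHilbertDimGE (A : HilbCat 𝕜) (c : Cardinal) : Prop :=
  ∃ (ι : Type) (_ : HilbertBasis ι 𝕜 A.carrier), c ≤ Cardinal.mk ι


section Aux

namespace Stmt13Aux

open Submodule Set

variable {𝕜 : Type} [RCLike 𝕜] (A : HilbCat 𝕜) {ι : Type} (b : HilbertBasis ι 𝕜 A.carrier)

/-- The closed span of the basis vectors indexed by `s`. -/
noncomputable def K (s : Set ι) : Submodule 𝕜 A.carrier :=
  (Submodule.span 𝕜 (⇑b '' s)).topologicalClosure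

instance (s : Set ι) : CompleteSpace (K A b s) :=
  (Submodule.isClosed_topologicalClosure _).completeSpace_coe

/-- The closed span as an object of `HilbCat`. -/
noncomputable def KObj (s : Set ι) : HilbCat 𝕜 := ⟨K A b s⟩

theorem basis_mem_K {s : Set ι} {i : ι} (hi : i ∈ s) : b i ∈ K A b s :=
  (Submodule.span 𝕜 (⇑b '' s)).le_topologicalClosure
    (Submodule.subset_span ⟨i, hi, rfl⟩)

/-- The family of basis vectors in the closed span. -/
noncomputable def KFam (s : Set ι) : s → (KObj A b s).carrier :=
  fun i => ⟨b i, basis_mem_K A b i.2⟩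

theorem KFam_orthonormal (s : Set ι) : Orthonormal 𝕜 (KFam A b s) := by
  classical
  rw [orthonormal_iff_ite]
  intro i j
  have hb := b.orthonormal
  rw [orthonormal_iff_ite] at hb
  have hco : (inner 𝕜 (KFam A b s i) (KFam A b s j) : 𝕜) = inner 𝕜 (b (i : ι)) (b (j : ι)) :=
    Submodule.coe_inner _ _ _
  rw [hco, hb]
  by_cases hij : i = j
  · simp [hij]
  · have hne : (i : ι) ≠ (j : ι) := fun hh => hij (Subtype.ext hh)
    simp [hij, hne]

theorem KFam_dense_span (s : Set ι) :
    ⊤ ≤ (Submodule.span 𝕜 (Set.range (KFam A b s))).topologicalClosure := by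
  intro x _
  have hmap : (Submodule.span 𝕜 (Set.range (KFam A b s))).map (K A b s).subtype
      = Submodule.span 𝕜 (⇑b '' s) := by
    erw [Submodule.map_span]
    congr 1
    ext y
    constructor
    · rintro ⟨z, ⟨i, rfl⟩, rfl⟩
      exact ⟨i, i.2, rfl⟩
    · rintro ⟨i, hi, rfl⟩
      exact ⟨KFam A b s ⟨i, hi⟩, ⟨⟨i, hi⟩, rfl⟩, rfl⟩
  show x ∈ closure ((Submodule.span 𝕜 (Set.range (KFam A b s)) :
      Submodule 𝕜 (KObj A b s).carrier) : Set (KObj A b s).carrier)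
  erw [closure_subtype]
  have himg : Subtype.val '' ((Submodule.span 𝕜 (Set.range (KFam A b s)) :
      Submodule 𝕜 (KObj A b s).carrier) : Set (KObj A b s).carrier)
      = ((Submodule.span 𝕜 (⇑b '' s) : Submodule 𝕜 A.carrier) : Set A.carrier) := by
    rw [← hmap]; rfl
  rw [himg, ← Submodule.topologicalClosure_coe]
  exact x.2

/-- A Hilbert basis of the closed span, indexed by `s`. -/
noncomputable def KBasis (s : Set ι) : HilbertBasis s 𝕜 (KObj A b s).carrier :=
  HilbertBasis.mk (KFam_orthonormal A b s) (KFam_dense_span A b s)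

theorem K_mono {s t : Set ι} (hst : s ⊆ t) : K A b s ≤ K A b t :=
  Submodule.topologicalClosure_mono (Submodule.span_mono (Set.image_mono hst))

/-- The inclusion between closed spans as a morphism of `HilbCat`. -/
noncomputable def KIncl {s t : Set ι} (hst : s ⊆ t) : KObj A b s ⟶ KObj A b t :=
  toHom ⟨Submodule.inclusion (K_mono A b hst), fun _ => rfl⟩

/-- The inclusion of a closed span into `A`. -/
noncomputable def KLeg (s : Set ι) : KObj A b s ⟶ A :=
  toHom (K A b s).subtypeₗᵢ

end Stmt13Aux
end Aux

namespace Stmt13Aux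

variable {𝕜 : Type} [RCLike 𝕜] (A : HilbCat 𝕜) {ι : Type} (b : HilbertBasis ι 𝕜 A.carrier)

/-- The index type of subsets of `ι` of cardinality `lam`. -/
abbrev Idx (ι : Type) (lam : Cardinal) : Type := {s : Set ι // Cardinal.mk s = lam}

variable (lam : Cardinal)

/-- The diagram of closed spans of size-`lam` subsets of the basis. -/
noncomputable def Fdiag : Idx ι lam ⥤ HilbCat 𝕜 where
  obj s := KObj A b s.1
  map {s t} f := KIncl A b (leOfHom f)
  map_id s := LinearIsometry.ext fun x => rfl
  map_comp f g := LinearIsometry.ext fun x => rfl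

/-- The cocone over the diagram of closed spans with apex `A`. -/
noncomputable def Kcocone : CategoryTheory.Limits.Cocone (Fdiag A b lam) where
  pt := A
  ι :=
    { app := fun s => KLeg A b s.1
      naturality := fun s t f => LinearIsometry.ext fun x => rfl }

theorem leg_agree [IsDirected (Idx ι lam) (· ≤ ·)]
    (t : CategoryTheory.Limits.Cocone (Fdiag A b lam))
    (s s' : Idx ι lam) (x : A.carrier) (hx : x ∈ K A b s.1) (hx' : x ∈ K A b s'.1) :
    homFn (t.ι.app s) ⟨x, hx⟩ = homFn (t.ι.app s') ⟨x, hx'⟩ := by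
  obtain ⟨u, hu, hu'⟩ := directed_of (· ≤ ·) s s'
  have h1 := t.w (CategoryTheory.homOfLE hu)
  have h2 := t.w (CategoryTheory.homOfLE hu')
  have e1 : homFn (t.ι.app s) ⟨x, hx⟩ = homFn (t.ι.app u) ⟨x, K_mono A b hu hx⟩ := by
    rw [← h1]; rfl
  have e2 : homFn (t.ι.app s') ⟨x, hx'⟩ = homFn (t.ι.app u) ⟨x, K_mono A b hu' hx'⟩ := by
    rw [← h2]; rfl
  rw [e1, e2]

variable [Nonempty (Idx ι lam)] [IsDirected (Idx ι lam) (· ≤ ·)]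

theorem memD (x : (⨆ s : Idx ι lam, K A b s.1 : Submodule 𝕜 A.carrier)) :
    ∃ s : Idx ι lam, (x : A.carrier) ∈ K A b s.1 := by
  have hDir : Directed (· ≤ ·) (fun s : Idx ι lam => K A b s.1) := by
    intro s t
    obtain ⟨u, hu, hu'⟩ := directed_of (· ≤ ·) s t
    exact ⟨u, K_mono A b hu, K_mono A b hu'⟩
  exact (Submodule.mem_iSup_of_directed _ hDir).mp x.2

/-- The map on the union of the closed spans induced by a cocone. -/
noncomputable def descFn (t : CategoryTheory.Limits.Cocone (Fdiag A b lam)) :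
    (⨆ s : Idx ι lam, K A b s.1 : Submodule 𝕜 A.carrier) → t.pt.carrier :=
  fun x => homFn (t.ι.app (memD A b lam x).choose) ⟨x, (memD A b lam x).choose_spec⟩

theorem descFn_eq (t : CategoryTheory.Limits.Cocone (Fdiag A b lam))
    (x : (⨆ s : Idx ι lam, K A b s.1 : Submodule 𝕜 A.carrier))
    (s : Idx ι lam) (hx : (x : A.carrier) ∈ K A b s.1) :
    descFn A b lam t x = homFn (t.ι.app s) ⟨x, hx⟩ :=
  leg_agree A b lam t _ s x _ hx

/-- The linear isometry on the union of the closed spans induced by a cocone. -/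
noncomputable def descIso (t : CategoryTheory.Limits.Cocone (Fdiag A b lam)) :
    (⨆ s : Idx ι lam, K A b s.1 : Submodule 𝕜 A.carrier) →ₗᵢ[𝕜] t.pt.carrier where
  toFun := descFn A b lam t
  map_add' x y := by
    obtain ⟨sx, hx⟩ := memD A b lam x
    obtain ⟨sy, hy⟩ := memD A b lam y
    obtain ⟨u, hu, hu'⟩ := directed_of (· ≤ ·) sx sy
    have hxu : (x : A.carrier) ∈ K A b u.1 := K_mono A b hu hx
    have hyu : (y : A.carrier) ∈ K A b u.1 := K_mono A b hu' hy
    have hxyu : ((x + y : _) : A.carrier) ∈ K A b u.1 := by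
      exact (K A b u.1).add_mem hxu hyu
    rw [descFn_eq A b lam t _ u hxyu, descFn_eq A b lam t x u hxu,
      descFn_eq A b lam t y u hyu]
    have hsum : (⟨((x + y : _) : A.carrier), hxyu⟩ : K A b u.1)
        = ⟨(x : A.carrier), hxu⟩ + ⟨(y : A.carrier), hyu⟩ := rfl
    rw [hsum]
    exact (homFn (t.ι.app u)).map_add ⟨(x : A.carrier), hxu⟩ ⟨(y : A.carrier), hyu⟩
  map_smul' c x := by
    obtain ⟨s, hx⟩ := memD A b lam x
    have hcx : ((c • x : _) : A.carrier) ∈ K A b s.1 := (K A b s.1).smul_mem c hx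
    show descFn A b lam t (c • x) = c • descFn A b lam t x
    rw [descFn_eq A b lam t _ s hcx, descFn_eq A b lam t x s hx]
    have hsm : (⟨((c • x : _) : A.carrier), hcx⟩ : K A b s.1)
        = c • ⟨(x : A.carrier), hx⟩ := rfl
    rw [hsm]
    exact (homFn (t.ι.app s)).map_smul c ⟨(x : A.carrier), hx⟩
  norm_map' x := by
    obtain ⟨s, hx⟩ := memD A b lam x
    show ‖descFn A b lam t x‖ = ‖x‖
    rw [descFn_eq A b lam t x s hx]
    exact (homFn (t.ι.app s)).norm_map _

/-- The extension of `descIso` to all of `A`. -/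
noncomputable def extCLM (t : CategoryTheory.Limits.Cocone (Fdiag A b lam))
    (hD : Dense ((⨆ s : Idx ι lam, K A b s.1 : Submodule 𝕜 A.carrier) : Set A.carrier)) :
    A.carrier →L[𝕜] t.pt.carrier :=
  (descIso A b lam t).toContinuousLinearMap.extend
    (Submodule.subtypeL _)

theorem extCLM_eq (t : CategoryTheory.Limits.Cocone (Fdiag A b lam))
    (hD : Dense ((⨆ s : Idx ι lam, K A b s.1 : Submodule 𝕜 A.carrier) : Set A.carrier))
    (d : (⨆ s : Idx ι lam, K A b s.1 : Submodule 𝕜 A.carrier)) :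
    extCLM A b lam t hD (d : A.carrier) = descFn A b lam t d :=
  ContinuousLinearMap.extend_eq _ hD.denseRange_val isUniformEmbedding_subtype_val.isUniformInducing d

theorem extCLM_norm (t : CategoryTheory.Limits.Cocone (Fdiag A b lam))
    (hD : Dense ((⨆ s : Idx ι lam, K A b s.1 : Submodule 𝕜 A.carrier) : Set A.carrier))
    (y : A.carrier) : ‖extCLM A b lam t hD y‖ = ‖y‖ := by
  have heq : (fun y : A.carrier => ‖extCLM A b lam t hD y‖) = fun y => ‖y‖ := by
    refine DenseRange.equalizer hD.denseRange_val
      ((extCLM A b lam t hD).continuous.norm) continuous_norm (funext fun d => ?_)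
    show ‖extCLM A b lam t hD (d : A.carrier)‖ = ‖(d : A.carrier)‖
    rw [extCLM_eq]
    exact (descIso A b lam t).norm_map d
  exact congrFun heq y

/-- The morphism `A ⟶ t.pt` induced by a cocone `t`. -/
noncomputable def descHom (t : CategoryTheory.Limits.Cocone (Fdiag A b lam))
    (hD : Dense ((⨆ s : Idx ι lam, K A b s.1 : Submodule 𝕜 A.carrier) : Set A.carrier)) :
    A ⟶ t.pt :=
  toHom ⟨(extCLM A b lam t hD).toLinearMap, extCLM_norm A b lam t hD⟩

/-- The cocone `Kcocone` is a colimit. -/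
noncomputable def KisColimit
    (hD : Dense ((⨆ s : Idx ι lam, K A b s.1 : Submodule 𝕜 A.carrier) : Set A.carrier)) :
    CategoryTheory.Limits.IsColimit (Kcocone A b lam) where
  desc t := descHom A b lam t hD
  fac t s := by
    refine LinearIsometry.ext fun x0 => ?_
    obtain ⟨x, hx⟩ : (KObj A b s.1).carrier := x0
    have hxD : x ∈ (⨆ s : Idx ι lam, K A b s.1 : Submodule 𝕜 A.carrier) :=
      le_iSup (fun s : Idx ι lam => K A b s.1) s hx
    show extCLM A b lam t hD x = homFn (t.ι.app s) ⟨x, hx⟩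
    have h1 : extCLM A b lam t hD ((⟨x, hxD⟩ :
        (⨆ s : Idx ι lam, K A b s.1 : Submodule 𝕜 A.carrier)) : A.carrier)
        = descFn A b lam t ⟨x, hxD⟩ := extCLM_eq A b lam t hD _
    rw [h1, descFn_eq A b lam t _ s hx]
  uniq t m hm := by
    have key : ⇑(homFn m) = ⇑(homFn (descHom A b lam t hD)) := by
      refine DenseRange.equalizer hD.denseRange_val
        (homFn m).continuous (homFn (descHom A b lam t hD)).continuous (funext fun d => ?_)
      obtain ⟨s, hs⟩ := memD A b lam d
      show homFn m (d : A.carrier) = homFn (descHom A b lam t hD) (d : A.carrier)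
      have h2 : homFn (descHom A b lam t hD) (d : A.carrier) = descFn A b lam t d :=
        extCLM_eq A b lam t hD d
      have h3 : homFn m (d : A.carrier)
          = homFn ((Kcocone A b lam).ι.app s ≫ m) ⟨(d : A.carrier), hs⟩ := rfl
      rw [h2, h3, hm s, descFn_eq A b lam t d s hs]
    exact LinearIsometry.ext fun x => congrFun key x
  end Stmt13Aux

namespace Stmt13Aux

theorem idx_nonempty {ι : Type} {lam : Cardinal} (hge : lam ≤ Cardinal.mk ι) :
    Nonempty (Idx ι lam) := by
  obtain ⟨p, hp⟩ := Cardinal.le_mk_iff_exists_set.mp hge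
  exact ⟨⟨p, hp⟩⟩

theorem idx_directed {ι : Type} {lam : Cardinal} (hlam : Cardinal.aleph0 ≤ lam) :
    IsDirected (Idx ι lam) (· ≤ ·) := by
  constructor
  rintro ⟨s, hs⟩ ⟨t, ht⟩
  have hcard : Cardinal.mk ↥(s ∪ t) = lam := by
    refine le_antisymm ?_ ?_
    · calc Cardinal.mk ↥(s ∪ t) ≤ Cardinal.mk ↥s + Cardinal.mk ↥t := Cardinal.mk_union_le s t
        _ = lam := by rw [hs, ht, Cardinal.add_eq_self hlam]
    · rw [← hs]
      exact Cardinal.mk_le_mk_of_subset Set.subset_union_left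
  exact ⟨⟨s ∪ t, hcard⟩, Set.subset_union_left, Set.subset_union_right⟩

theorem dense_iSup {𝕜 : Type} [RCLike 𝕜] (A : HilbCat 𝕜) {ι : Type}
    (b : HilbertBasis ι 𝕜 A.carrier) {lam : Cardinal} (hlam : Cardinal.aleph0 ≤ lam)
    [Nonempty (Idx ι lam)] :
    Dense ((⨆ s : Idx ι lam, K A b s.1 : Submodule 𝕜 A.carrier) : Set A.carrier) := by
  have hle : Submodule.span 𝕜 (Set.range ⇑b)
      ≤ (⨆ s : Idx ι lam, K A b s.1 : Submodule 𝕜 A.carrier) := by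
    rw [Submodule.span_le]
    rintro _ ⟨i, rfl⟩
    obtain s₀ := Classical.arbitrary (Idx ι lam)
    have hcard : Cardinal.mk ↥(s₀.1 ∪ {i}) = lam := by
      refine le_antisymm ?_ ?_
      · refine (Cardinal.mk_union_le _ _).trans ?_
        rw [s₀.2, Cardinal.mk_singleton]
        exact le_of_eq (Cardinal.add_one_eq hlam)
      · calc lam = Cardinal.mk ↥s₀.1 := s₀.2.symm
          _ ≤ _ := Cardinal.mk_le_mk_of_subset Set.subset_union_left
    have hmem : b i ∈ K A b (s₀.1 ∪ {i}) := basis_mem_K A b (Set.mem_union_right _ rfl)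
    exact le_iSup (fun s : Idx ι lam => K A b s.1) ⟨_, hcard⟩ hmem
  have hd : Dense ((Submodule.span 𝕜 (Set.range ⇑b) : Submodule 𝕜 A.carrier) : Set A.carrier) := by
    rw [Submodule.dense_iff_topologicalClosure_eq_top]
    exact b.dense_span
  exact hd.mono hle

end Stmt13Aux

/-- If `U(f) = U(g)` for all parallel pairs with `dim A = λ`, then the same holds for all
parallel pairs with `dim A ≥ λ`. -/
theorem stmt_13 (U : HilbCat 𝕜 ⥤ Type) (hU : PreservesDirectedColimits U)
    (lam : Cardinal) (hlam : Cardinal.aleph0 ≤ lam)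
    (h : ∀ (A B : HilbCat 𝕜) (f g : A ⟶ B), HasHilbertDim A lam → U.map f = U.map g) :
    ∀ (A B : HilbCat 𝕜) (f g : A ⟶ B), HasHilbertDimGE A lam → U.map f = U.map g := by
  rintro A B f g ⟨ι, b, hge⟩
  haveI hne : Nonempty (Stmt13Aux.Idx ι lam) := Stmt13Aux.idx_nonempty hge
  haveI hdir : IsDirected (Stmt13Aux.Idx ι lam) (· ≤ ·) := Stmt13Aux.idx_directed hlam
  obtain ⟨P⟩ := hU (Stmt13Aux.Idx ι lam)
  haveI := P
  have hD := Stmt13Aux.dense_iSup A b hlam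
  have hc : IsColimit (U.mapCocone (Stmt13Aux.Kcocone A b lam)) :=
    isColimitOfPreserves U (Stmt13Aux.KisColimit A b lam hD)
  ext x
  obtain ⟨s, y, hy⟩ := Types.jointly_surjective _ hc x
  have hy' : U.map ((Stmt13Aux.Kcocone A b lam).ι.app s) y = x := hy
  have hpar : U.map ((Stmt13Aux.Kcocone A b lam).ι.app s ≫ f)
      = U.map ((Stmt13Aux.Kcocone A b lam).ι.app s ≫ g) :=
    h _ B _ _ ⟨s.1, Stmt13Aux.KBasis A b s.1, s.2⟩
  calc U.map f x = U.map ((Stmt13Aux.Kcocone A b lam).ι.app s ≫ f) y := by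
        rw [← hy']; exact (FunctorToTypes.map_comp_apply U _ f y).symm
    _ = U.map ((Stmt13Aux.Kcocone A b lam).ι.app s ≫ g) y := by rw [hpar]
    _ = U.map g x := by rw [← hy']; exact FunctorToTypes.map_comp_apply U _ g y
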